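/- Let 0 < q < 1 and 0 < ε₀ ≤ 1 − q. Let n′, n″ ∈ ℕ, let a′₁, …, a′_{n′} ∈ ℂ and a″₁, …, a″_{n″} ∈ ℂ, and let m′ := (1/n′) ∑_{i=1}^{n′} δ_{a′ᵢ} and m″ := (1/n″) ∑_{j=1}^{n″} δ_{a″ⱼ} be the corresponding empirical probability measures. If π(m′, m″) < ε₀, then at least ⌊q n″⌋ of the indices j ∈ {1, …, n″} satisfy min_{1≤i≤n′} |a′ᵢ − a″ⱼ| < ε₀. -/

import Mathlib

open MeasureTheory

/-- The empirical (probability) measure of points `a 0, …, a (N-1)` of `ℂ`. -/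
noncomputable def empiricalFin {N : ℕ} (a : Fin N → ℂ) : Measure ℂ :=
  (N : ENNReal)⁻¹ • ∑ i, MeasureTheory.Measure.dirac (a i)

/-- The Prohorov metric between two (probability) measures on `ℂ`:
`π(m′, m″) = inf{ε > 0 : m′(A) ≤ m″(A^ε) + ε and m″(A) ≤ m′(A^ε) + ε ∀ Borel A}`,
where `A^ε = ⋃_{a ∈ A} {z : |z - a| < ε}`. -/
noncomputable def prohorovDist (m m' : Measure ℂ) : ℝ :=
  sInf {ε : ℝ | 0 < ε ∧ ∀ A : Set ℂ, MeasurableSet A →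
    m A ≤ m' (⋃ a ∈ A, Metric.ball a ε) + ENNReal.ofReal ε ∧
    m' A ≤ m (⋃ a ∈ A, Metric.ball a ε) + ENNReal.ofReal ε}

open Classical in
lemma empiricalFin_apply {N : ℕ} (a : Fin N → ℂ) (A : Set ℂ) :
    empiricalFin a A
      = (N : ENNReal)⁻¹ * (Finset.univ.filter (fun i => a i ∈ A)).card := by
  simp only [empiricalFin, Measure.smul_apply, Measure.finset_sum_apply,
    Measure.dirac_apply, smul_eq_mul]
  congr 1
  have : ∀ i : Fin N, A.indicator (1 : ℂ → ENNReal) (a i)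
      = if a i ∈ A then 1 else 0 := fun i => by simp [Set.indicator_apply]
  simp only [this, Finset.sum_boole]

lemma empiricalFin_le_one {N : ℕ} (a : Fin N → ℂ) (A : Set ℂ) :
    empiricalFin a A ≤ 1 := by
  classical
  rw [empiricalFin_apply]
  rcases Nat.eq_zero_or_pos N with h | h
  · subst h; simp
  · have hc : ((Finset.univ.filter (fun i => a i ∈ A)).card : ENNReal) ≤ N := by
      exact_mod_cast (Finset.card_filter_le _ _).trans (by simp)
    calc (N : ENNReal)⁻¹ * _ ≤ (N : ENNReal)⁻¹ * N := mul_le_mul_right hc _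
    _ = 1 := ENNReal.inv_mul_cancel (by exact_mod_cast h.ne') (by simp)

lemma empiricalFin_card_le {N : ℕ} (a : Fin N → ℂ) (A : Set ℂ) (s : Finset (Fin N))
    (hs : ∀ i ∈ s, a i ∈ A) :
    (N : ENNReal)⁻¹ * s.card ≤ empiricalFin a A := by
  classical
  rw [empiricalFin_apply]
  exact mul_le_mul_right (Nat.cast_le.mpr (Finset.card_le_card fun i hi =>
    Finset.mem_filter.mpr ⟨Finset.mem_univ _, hs i hi⟩)) _

/-- Let `0 < q < 1` and `0 < ε₀ ≤ 1 - q`.  If the empirical measures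
`m′` of `a′₁, …, a′_{n′}` and `m″` of `a″₁, …, a″_{n″}` satisfy `π(m′, m″) < ε₀`, then
at least `⌊q n″⌋` of the indices `j` satisfy `min_i |a′ᵢ - a″ⱼ| < ε₀`. -/
theorem statement11
    (q ε₀ : ℝ) (hq0 : 0 < q) (hq1 : q < 1) (hε0 : 0 < ε₀) (hε1 : ε₀ ≤ 1 - q)
    (n' n'' : ℕ) (hn' : 1 ≤ n') (hn'' : 1 ≤ n'')
    (a' : Fin n' → ℂ) (a'' : Fin n'' → ℂ)
    (hπ : prohorovDist (empiricalFin a') (empiricalFin a'') < ε₀) :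
    ⌊q * (n'' : ℝ)⌋₊ ≤
      (Finset.univ.filter
        (fun j : Fin n'' => ∃ i : Fin n', ‖a' i - a'' j‖ < ε₀)).card := by
  classical
  set Good := Finset.univ.filter
      (fun j : Fin n'' => ∃ i : Fin n', ‖a' i - a'' j‖ < ε₀) with hGoodDef
  set Bad := Finset.univ.filter
      (fun j : Fin n'' => ¬ ∃ i : Fin n', ‖a' i - a'' j‖ < ε₀) with hBadDef
  have hcard : Good.card + Bad.card = n'' := by
    rw [hGoodDef, hBadDef, Finset.card_filter_add_card_filter_not]
    simp
  -- the defining set of the Prohorov distance is nonempty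
  have hne : {ε : ℝ | 0 < ε ∧ ∀ A : Set ℂ, MeasurableSet A →
      empiricalFin a' A ≤ empiricalFin a'' (⋃ a ∈ A, Metric.ball a ε) + ENNReal.ofReal ε ∧
      empiricalFin a'' A ≤ empiricalFin a' (⋃ a ∈ A, Metric.ball a ε) + ENNReal.ofReal ε}.Nonempty := by
    refine ⟨2, by norm_num, fun A hA => ⟨?_, ?_⟩⟩ <;>
    · refine le_trans (empiricalFin_le_one _ _) (le_add_left ?_)
      rw [show (1 : ENNReal) = ENNReal.ofReal 1 by simp]
      exact ENNReal.ofReal_le_ofReal (by norm_num)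
  obtain ⟨ε, hεS, hεlt⟩ := exists_lt_of_csInf_lt hne hπ
  obtain ⟨hεpos, hεprop⟩ := hεS
  -- the bad set of points
  set A : Set ℂ := ↑(Bad.image a'') with hADef
  have hmeas : MeasurableSet A := (Bad.image a'').measurableSet
  have key := (hεprop A hmeas).2
  -- the ε-enlargement of A contains no a' i
  have hA' : empiricalFin a' (⋃ a ∈ A, Metric.ball a ε) = 0 := by
    rw [empiricalFin_apply]
    convert mul_zero _
    rw [Nat.cast_eq_zero, Finset.card_eq_zero, Finset.filter_eq_empty_iff]
    intro i _
    simp only [Set.mem_iUnion, not_exists]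
    rintro z hz hball
    rw [hADef] at hz
    simp only [Finset.coe_image, Set.mem_image, Finset.mem_coe] at hz
    obtain ⟨j, hj, rfl⟩ := hz
    rw [hBadDef, Finset.mem_filter] at hj
    push_neg at hj
    have := hj.2 i
    rw [Metric.mem_ball] at hball
    have habs : ‖a' i - a'' j‖ < ε := by
      rwa [Complex.dist_eq] at hball
    linarith
  -- lower bound for the measure of A
  have hlow : (n'' : ENNReal)⁻¹ * Bad.card ≤ empiricalFin a'' A := by
    refine empiricalFin_card_le a'' A Bad fun j hj => ?_
    rw [hADef]
    simp only [Finset.coe_image, Set.mem_image, Finset.mem_coe]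
    exact ⟨j, hj, rfl⟩
  have hchain : (n'' : ENNReal)⁻¹ * Bad.card ≤ ENNReal.ofReal ε := by
    calc (n'' : ENNReal)⁻¹ * Bad.card ≤ empiricalFin a'' A := hlow
    _ ≤ empiricalFin a' (⋃ a ∈ A, Metric.ball a ε) + ENNReal.ofReal ε := key
    _ = ENNReal.ofReal ε := by rw [hA', zero_add]
  -- convert to reals
  have hreal : ((n'' : ℝ))⁻¹ * Bad.card ≤ ε := by
    have h1 : ((n'' : ENNReal)⁻¹ * Bad.card).toReal ≤ (ENNReal.ofReal ε).toReal :=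
      ENNReal.toReal_mono ENNReal.ofReal_ne_top hchain
    rw [ENNReal.toReal_mul, ENNReal.toReal_inv, ENNReal.toReal_ofReal hεpos.le] at h1
    simpa using h1
  have hn''pos : (0 : ℝ) < n'' := by exact_mod_cast hn''
  have hBadlt : (Bad.card : ℝ) < (1 - q) * n'' := by
    have : (Bad.card : ℝ) ≤ n'' * ε := by
      have := mul_le_mul_of_nonneg_left hreal hn''pos.le
      rwa [← mul_assoc, mul_inv_cancel₀ hn''pos.ne', one_mul] at this
    calc (Bad.card : ℝ) ≤ n'' * ε := this
    _ < n'' * ε₀ := by exact mul_lt_mul_of_pos_left hεlt hn''pos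
    _ ≤ n'' * (1 - q) := by nlinarith
    _ = (1 - q) * n'' := mul_comm _ _
  have hGoodgt : q * n'' < Good.card := by
    have : (Good.card : ℝ) = n'' - Bad.card := by
      have := hcard
      push_cast [← this]
      ring
    nlinarith
  have hfl : (⌊q * (n'' : ℝ)⌋₊ : ℝ) ≤ q * n'' := Nat.floor_le (by positivity)
  have : (⌊q * (n'' : ℝ)⌋₊ : ℝ) < Good.card := lt_of_le_of_lt hfl hGoodgt
  exact_mod_cast this.le
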